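/- Under Assumption (K) on the kernel k, for every λ∈ℂ, T>0, every n∈ℕ and all f,g∈B_b([0,T],ℂ), the iterates of the operator R_λ satisfy sup_{0≤t≤T}|R_λ^{n+1}g(t)−R_λ^{n+1}f(t)| ≤ (|λ| K_T T^{1−α*})^{n+1} · ∏_{l=1}^{n} (l(1−α*)(1+1/ε)+1)^{−ε/(1+ε)} · ‖g−f‖_∞; moreover, the factor (|λ| K_T T^{1−α*})^{n+1} ∏_{l=1}^{n} (l(1−α*)(1+1/ε)+1)^{−ε/(1+ε)} tends to 0 as n→∞. -/

import Mathlib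

open MeasureTheory Filter

noncomputable section

noncomputable def Rop (k : ℝ → ℝ → ℝ) (lam : ℂ) (g : ℝ → ℂ) : ℝ → ℂ :=
  fun t => if 0 < t then 1 - lam * ∫ s in Set.Ioc (0:ℝ) t, (k t s : ℂ) * g s else 1

def BddBorelOn (T : ℝ) (g : ℝ → ℂ) : Prop :=
  Measurable g ∧ ∃ M : ℝ, ∀ t ∈ Set.Icc (0:ℝ) T, ‖g t‖ ≤ M

private lemma aux_tendsto (u : ℕ → ℝ) (hu : ∀ n, 0 ≤ u n)
    (h : ∃ N, ∀ n, N ≤ n → u (n+1) ≤ u n / 2) : Tendsto u atTop (nhds 0) := by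
  obtain ⟨N, hN⟩ := h
  have hb : ∀ m, u (N + m) ≤ u N * (1/2)^m := by
    intro m
    induction m with
    | zero => simp
    | succ m ih =>
      have h2 := hN (N+m) (Nat.le_add_right _ _)
      calc u (N + (m+1)) = u ((N+m)+1) := by rw [Nat.add_assoc]
        _ ≤ u (N+m) / 2 := h2
        _ ≤ (u N * (1/2)^m)/2 := by linarith
        _ = u N * (1/2)^(m+1) := by ring
  have h0 : Tendsto (fun m : ℕ => u N * (1/2:ℝ)^m) atTop (nhds 0) := by
    have := (tendsto_pow_atTop_nhds_zero_of_lt_one (by norm_num : (0:ℝ) ≤ 1/2)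
      (by norm_num : (1/2:ℝ) < 1)).const_mul (u N)
    simpa using this
  have h1 : Tendsto (fun m => u (N + m)) atTop (nhds 0) :=
    squeeze_zero (fun m => hu _) hb h0
  have h2 : Tendsto (fun m => u (m + N)) atTop (nhds 0) := by
    simpa [Nat.add_comm] using h1
  exact (tendsto_add_atTop_iff_nat N).mp h2

private lemma auxA (k : ℝ → ℝ → ℝ) (hkm : Measurable (Function.uncurry k))
    (α ε : ℝ) (hε : 0 < ε) (T : ℝ) (KT : ℝ)
    (hK : ∀ t : ℝ, 0 < t → t ≤ T →
      MeasureTheory.IntegrableOn (fun s => |k t s| ^ (1 + ε)) (Set.Ioc 0 t) ∧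
      t ^ (α - 1 / (1 + ε)) *
        (∫ s in Set.Ioc (0:ℝ) t, |k t s| ^ (1 + ε)) ^ (1 / (1 + ε)) ≤ KT)
    (t : ℝ) (ht0 : 0 < t) (htT : t ≤ T) (B β : ℝ) (hB : 0 ≤ B) (hβ : 0 ≤ β)
    (h : ℝ → ℂ) (hm : Measurable h) (hbd : ∀ s ∈ Set.Ioc (0:ℝ) t, ‖h s‖ ≤ B * s ^ β) :
    MeasureTheory.IntegrableOn (fun s => (k t s : ℂ) * h s) (Set.Ioc 0 t) ∧
    ∫ s in Set.Ioc (0:ℝ) t, |k t s| * ‖h s‖ ≤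
      KT * B * (β * (1 + 1/ε) + 1) ^ (-(ε/(1+ε))) * t ^ (1 - α + β) := by
  have hεn : ε ≠ 0 := ne_of_gt hε
  have hp0 : (0:ℝ) < 1 + ε := by linarith
  have hq0 : (0:ℝ) < 1 + 1/ε := by positivity
  have hpq : Real.HolderConjugate (1+ε) (1+1/ε) :=
    ⟨by have : (1+ε) ≠ 0 := (by linarith); field_simp; ring, by linarith, hq0⟩
  haveI hfin : IsFiniteMeasure (volume.restrict (Set.Ioc (0:ℝ) t)) := by
    constructor
    rw [Measure.restrict_apply_univ, Real.volume_Ioc]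
    exact ENNReal.ofReal_lt_top
  have hkt : Measurable (fun s => k t s) := hkm.of_uncurry_left
  obtain ⟨hKi, hK2⟩ := hK t ht0 htT
  have habs : Measurable fun s => |k t s| := hkt.abs
  have hofr : (ENNReal.ofReal (1+ε)).toReal = 1 + ε := ENNReal.toReal_ofReal hp0.le
  have hofne : ENNReal.ofReal (1+ε) ≠ 0 := by
    simp only [ne_eq, ENNReal.ofReal_eq_zero, not_le]; linarith
  have hmemk : MemLp (fun s => |k t s|) (ENNReal.ofReal (1+ε))
      (volume.restrict (Set.Ioc (0:ℝ) t)) := by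
    rw [← memLp_norm_rpow_iff habs.aestronglyMeasurable hofne ENNReal.ofReal_ne_top,
      ENNReal.div_self hofne ENNReal.ofReal_ne_top, memLp_one_iff_integrable, hofr]
    simpa [Real.norm_eq_abs, abs_abs] using hKi.integrable
  have hk1 : Integrable (fun s => |k t s|) (volume.restrict (Set.Ioc (0:ℝ) t)) :=
    hmemk.integrable (ENNReal.one_le_ofReal.mpr (by linarith))
  have hψm : Measurable fun s : ℝ => B * s ^ β := by fun_prop
  have hψb : ∀ᵐ s ∂(volume.restrict (Set.Ioc (0:ℝ) t)), s ∈ Set.Ioc (0:ℝ) t :=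
    ae_restrict_mem measurableSet_Ioc
  have hmemψ : MemLp (fun s => B * s ^ β) (ENNReal.ofReal (1+1/ε))
      (volume.restrict (Set.Ioc (0:ℝ) t)) := by
    refine MemLp.mono_exponent (q := ⊤) ?_ le_top
    refine memLp_top_of_bound hψm.aestronglyMeasurable (B * t ^ β) ?_
    filter_upwards [hψb] with s hs
    rw [Real.norm_eq_abs, abs_of_nonneg (mul_nonneg hB (Real.rpow_nonneg hs.1.le β))]
    exact mul_le_mul_of_nonneg_left (Real.rpow_le_rpow hs.1.le hs.2 hβ) hB
  have hdom : Integrable (fun s => |k t s| * (B * t ^ β))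
      (volume.restrict (Set.Ioc (0:ℝ) t)) := hk1.mul_const _
  have hψint : Integrable (fun s => |k t s| * (B * s ^ β))
      (volume.restrict (Set.Ioc (0:ℝ) t)) := by
    refine hdom.mono' (habs.mul hψm).aestronglyMeasurable ?_
    filter_upwards [hψb] with s hs
    rw [Real.norm_eq_abs, abs_mul, abs_abs,
      abs_of_nonneg (mul_nonneg hB (Real.rpow_nonneg hs.1.le β))]
    exact mul_le_mul_of_nonneg_left
      (mul_le_mul_of_nonneg_left (Real.rpow_le_rpow hs.1.le hs.2 hβ) hB) (abs_nonneg _)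
  constructor
  · refine hdom.mono' ((Complex.measurable_ofReal.comp hkt).mul hm).aestronglyMeasurable ?_
    filter_upwards [hψb] with s hs
    rw [norm_mul, Complex.norm_real, Real.norm_eq_abs]
    calc |k t s| * ‖h s‖ ≤ |k t s| * (B * s ^ β) :=
          mul_le_mul_of_nonneg_left (hbd s hs) (abs_nonneg _)
      _ ≤ |k t s| * (B * t ^ β) := mul_le_mul_of_nonneg_left
          (mul_le_mul_of_nonneg_left (Real.rpow_le_rpow hs.1.le hs.2 hβ) hB) (abs_nonneg _)
  · have step1 : ∫ s in Set.Ioc (0:ℝ) t, |k t s| * ‖h s‖ ≤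
        ∫ s in Set.Ioc (0:ℝ) t, |k t s| * (B * s ^ β) := by
      refine integral_mono_of_nonneg (ae_of_all _ fun s => by positivity) hψint ?_
      filter_upwards [hψb] with s hs
      exact mul_le_mul_of_nonneg_left (hbd s hs) (abs_nonneg _)
    have step2 : ∫ s in Set.Ioc (0:ℝ) t, |k t s| * (B * s ^ β) ≤
        (∫ s in Set.Ioc (0:ℝ) t, |k t s| ^ (1+ε)) ^ (1/(1+ε)) *
          (∫ s in Set.Ioc (0:ℝ) t, (B * s ^ β) ^ (1+1/ε)) ^ (1/(1+1/ε)) := by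
      refine integral_mul_le_Lp_mul_Lq_of_nonneg hpq (ae_of_all _ fun s => abs_nonneg _)
        ?_ hmemk hmemψ
      filter_upwards [hψb] with s hs
      exact mul_nonneg hB (Real.rpow_nonneg hs.1.le β)
    have hβq : 0 ≤ β * (1 + 1/ε) := mul_nonneg hβ hq0.le
    have hD : (0:ℝ) < β * (1 + 1/ε) + 1 := by linarith
    have hint : ∫ s in Set.Ioc (0:ℝ) t, (B * s ^ β) ^ (1+1/ε) =
        B ^ (1+1/ε) * (t ^ (β*(1+1/ε)+1) / (β*(1+1/ε)+1)) := by
      have hcg : Set.EqOn (fun s : ℝ => (B * s ^ β) ^ (1+1/ε))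
          (fun s : ℝ => B ^ (1+1/ε) * s ^ (β*(1+1/ε))) (Set.Ioc 0 t) := by
        intro s hs
        simp only
        rw [Real.mul_rpow hB (Real.rpow_nonneg hs.1.le β), ← Real.rpow_mul hs.1.le]
      rw [setIntegral_congr_fun measurableSet_Ioc hcg, integral_const_mul]
      congr 1
      rw [← intervalIntegral.integral_of_le ht0.le,
        integral_rpow (Or.inl (by linarith : (-1:ℝ) < β*(1+1/ε))),
        Real.zero_rpow (by linarith : β*(1+1/ε)+1 ≠ 0), sub_zero]
    have hqr : 1 / (1 + 1/ε) = ε/(1+ε) := by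
      rw [div_eq_div_iff hq0.ne' hp0.ne']; field_simp; ring
    have hY : (∫ s in Set.Ioc (0:ℝ) t, (B * s ^ β) ^ (1+1/ε)) ^ (1/(1+1/ε)) =
        B * (t ^ (β + ε/(1+ε)) * (β*(1+1/ε)+1) ^ (-(ε/(1+ε)))) := by
      rw [hint, Real.mul_rpow (by positivity) (by positivity),
        Real.div_rpow (by positivity) hD.le,
        ← Real.rpow_mul hB, mul_one_div, div_self hq0.ne', Real.rpow_one,
        ← Real.rpow_mul ht0.le, hqr,
        show (β*(1+1/ε)+1) * (ε/(1+ε)) = β + ε/(1+ε) by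
          have key : ε/(1+ε) * (1+1/ε) = 1 := by
            rw [div_mul_eq_mul_div, div_eq_one_iff_eq hp0.ne']; field_simp; ring
          linear_combination β * key,
        Real.rpow_neg hD.le, div_eq_mul_inv]
    have hX0 : 0 ≤ (∫ s in Set.Ioc (0:ℝ) t, |k t s| ^ (1+ε)) ^ (1/(1+ε)) :=
      Real.rpow_nonneg (integral_nonneg fun s => Real.rpow_nonneg (abs_nonneg _) _) _
    have hX : (∫ s in Set.Ioc (0:ℝ) t, |k t s| ^ (1+ε)) ^ (1/(1+ε)) ≤
        KT * t ^ (1/(1+ε) - α) := by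
      calc (∫ s in Set.Ioc (0:ℝ) t, |k t s| ^ (1+ε)) ^ (1/(1+ε))
          = t ^ (1/(1+ε) - α) * (t ^ (α - 1/(1+ε)) *
            (∫ s in Set.Ioc (0:ℝ) t, |k t s| ^ (1+ε)) ^ (1/(1+ε))) := by
            rw [← mul_assoc, ← Real.rpow_add ht0,
              show 1/(1+ε) - α + (α - 1/(1+ε)) = 0 by ring, Real.rpow_zero, one_mul]
        _ ≤ t ^ (1/(1+ε) - α) * KT :=
            mul_le_mul_of_nonneg_left hK2 (Real.rpow_pos_of_pos ht0 _).le
        _ = KT * t ^ (1/(1+ε) - α) := mul_comm _ _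
    calc ∫ s in Set.Ioc (0:ℝ) t, |k t s| * ‖h s‖
        ≤ ∫ s in Set.Ioc (0:ℝ) t, |k t s| * (B * s ^ β) := step1
      _ ≤ (∫ s in Set.Ioc (0:ℝ) t, |k t s| ^ (1+ε)) ^ (1/(1+ε)) *
          (∫ s in Set.Ioc (0:ℝ) t, (B * s ^ β) ^ (1+1/ε)) ^ (1/(1+1/ε)) := step2
      _ = (∫ s in Set.Ioc (0:ℝ) t, |k t s| ^ (1+ε)) ^ (1/(1+ε)) *
          (B * (t ^ (β + ε/(1+ε)) * (β*(1+1/ε)+1) ^ (-(ε/(1+ε))))) := by rw [hY]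
      _ ≤ (KT * t ^ (1/(1+ε) - α)) *
          (B * (t ^ (β + ε/(1+ε)) * (β*(1+1/ε)+1) ^ (-(ε/(1+ε))))) := by
          refine mul_le_mul_of_nonneg_right hX ?_
          have : (0:ℝ) ≤ (β*(1+1/ε)+1) ^ (-(ε/(1+ε))) := Real.rpow_nonneg hD.le _
          positivity
      _ = KT * B * (β * (1 + 1/ε) + 1) ^ (-(ε/(1+ε))) *
          (t ^ (1/(1+ε) - α) * t ^ (β + ε/(1+ε))) := by ring
      _ = KT * B * (β * (1 + 1/ε) + 1) ^ (-(ε/(1+ε))) * t ^ (1 - α + β) := by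
          have key2 : 1/(1+ε) + ε/(1+ε) = 1 := by
            rw [← add_div, div_self hp0.ne']
          rw [← Real.rpow_add ht0,
            show 1/(1+ε) - α + (β + ε/(1+ε)) = 1 - α + β by linarith]

private lemma auxBmeas (k : ℝ → ℝ → ℝ) (hkm : Measurable (Function.uncurry k))
    (lam : ℂ) (g : ℝ → ℂ) (hgm : Measurable g) : Measurable (Rop k lam g) := by
  have hset : MeasurableSet {p : ℝ × ℝ | 0 < p.2 ∧ p.2 ≤ p.1} :=
    (measurableSet_lt measurable_const measurable_snd).inter
      (measurableSet_le measurable_snd measurable_fst)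
  have hFm : StronglyMeasurable
      (fun p : ℝ × ℝ => if 0 < p.2 ∧ p.2 ≤ p.1 then (k p.1 p.2 : ℂ) * g p.2 else 0) := by
    refine Measurable.stronglyMeasurable ?_
    exact Measurable.ite hset
      ((Complex.measurable_ofReal.comp hkm).mul (hgm.comp measurable_snd)) measurable_const
  have hJm : StronglyMeasurable
      (fun t : ℝ => ∫ s : ℝ, if 0 < s ∧ s ≤ t then (k t s : ℂ) * g s else 0) :=
    hFm.integral_prod_right'
  have heq : Rop k lam g = fun t =>
      if 0 < t then 1 - lam * ∫ s : ℝ, (if 0 < s ∧ s ≤ t then (k t s : ℂ) * g s else 0) else 1 := by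
    funext t
    unfold Rop
    by_cases ht : 0 < t
    · rw [if_pos ht, if_pos ht]
      congr 2
      rw [← integral_indicator measurableSet_Ioc]
      congr 1
      funext s
      simp [Set.indicator_apply, Set.mem_Ioc]
    · rw [if_neg ht, if_neg ht]
  rw [heq]
  exact Measurable.ite measurableSet_Ioi
    (measurable_const.sub (measurable_const.mul hJm.measurable)) measurable_const

private lemma auxB (k : ℝ → ℝ → ℝ) (hkm : Measurable (Function.uncurry k))
    (α ε : ℝ) (hα1 : α < 1) (hε : 0 < ε)
    (T : ℝ) (hT : 0 < T) (KT : ℝ) (hKT0 : 0 ≤ KT)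
    (hK : ∀ t : ℝ, 0 < t → t ≤ T →
      MeasureTheory.IntegrableOn (fun s => |k t s| ^ (1 + ε)) (Set.Ioc 0 t) ∧
      t ^ (α - 1 / (1 + ε)) *
        (∫ s in Set.Ioc (0:ℝ) t, |k t s| ^ (1 + ε)) ^ (1 / (1 + ε)) ≤ KT)
    (lam : ℂ) (g : ℝ → ℂ) (hg : BddBorelOn T g) : BddBorelOn T (Rop k lam g) := by
  refine ⟨auxBmeas k hkm lam g hg.1, ?_⟩
  obtain ⟨M, hM⟩ := hg.2
  refine ⟨1 + ‖lam‖ * (KT * max M 0 * T ^ (1 - α)), ?_⟩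
  intro t ht
  by_cases ht0 : 0 < t
  · have hbd : ∀ s ∈ Set.Ioc (0:ℝ) t, ‖g s‖ ≤ max M 0 * s ^ (0:ℝ) := by
      intro s hs
      rw [Real.rpow_zero, mul_one]
      exact (hM s ⟨hs.1.le, hs.2.trans ht.2⟩).trans (le_max_left _ _)
    have hA := auxA k hkm α ε hε T KT hK t ht0 ht.2 (max M 0) 0
      (le_max_right M 0) le_rfl g hg.1 hbd
    have hnorm : ‖∫ s in Set.Ioc (0:ℝ) t, (k t s : ℂ) * g s‖ ≤
        KT * max M 0 * T ^ (1 - α) := by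
      have h1 : ‖∫ s in Set.Ioc (0:ℝ) t, (k t s : ℂ) * g s‖ ≤
          ∫ s in Set.Ioc (0:ℝ) t, ‖(k t s : ℂ) * g s‖ := norm_integral_le_integral_norm _
      have h2 : ∫ s in Set.Ioc (0:ℝ) t, ‖(k t s : ℂ) * g s‖ =
          ∫ s in Set.Ioc (0:ℝ) t, |k t s| * ‖g s‖ := by
        simp only [norm_mul, Complex.norm_real, Real.norm_eq_abs]
      have h3 := hA.2
      rw [show (0*(1+1/ε)+1 : ℝ) = 1 by ring, Real.one_rpow, mul_one, add_zero] at h3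
      have h4 : t ^ (1 - α) ≤ T ^ (1 - α) :=
        Real.rpow_le_rpow ht0.le ht.2 (by linarith)
      have h5 : KT * max M 0 * t ^ (1-α) ≤ KT * max M 0 * T ^ (1-α) :=
        mul_le_mul_of_nonneg_left h4 (mul_nonneg hKT0 (le_max_right M 0))
      rw [h2] at h1
      exact h1.trans (h3.trans h5)
    calc ‖Rop k lam g t‖
        = ‖(1 : ℂ) - lam * ∫ s in Set.Ioc (0:ℝ) t, (k t s : ℂ) * g s‖ := by
          rw [Rop, if_pos ht0]
      _ ≤ ‖(1:ℂ)‖ + ‖lam * ∫ s in Set.Ioc (0:ℝ) t, (k t s : ℂ) * g s‖ := norm_sub_le _ _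
      _ = 1 + ‖lam‖ * ‖∫ s in Set.Ioc (0:ℝ) t, (k t s : ℂ) * g s‖ := by
          rw [norm_one, norm_mul]
      _ ≤ 1 + ‖lam‖ * (KT * max M 0 * T ^ (1 - α)) := by
          have := mul_le_mul_of_nonneg_left hnorm (norm_nonneg lam)
          linarith
  · have h1 : Rop k lam g t = 1 := by rw [Rop, if_neg ht0]
    rw [h1, norm_one]
    have h2 : 0 ≤ ‖lam‖ * (KT * max M 0 * T ^ (1 - α)) :=
      mul_nonneg (norm_nonneg _)
        (mul_nonneg (mul_nonneg hKT0 (le_max_right M 0)) (Real.rpow_nonneg hT.le _))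
    linarith

private lemma auxStep (k : ℝ → ℝ → ℝ) (hkm : Measurable (Function.uncurry k))
    (α ε : ℝ) (hα1 : α < 1) (hε : 0 < ε)
    (T : ℝ) (hT : 0 < T) (KT : ℝ) (hKT0 : 0 ≤ KT)
    (hK : ∀ t : ℝ, 0 < t → t ≤ T →
      MeasureTheory.IntegrableOn (fun s => |k t s| ^ (1 + ε)) (Set.Ioc 0 t) ∧
      t ^ (α - 1 / (1 + ε)) *
        (∫ s in Set.Ioc (0:ℝ) t, |k t s| ^ (1 + ε)) ^ (1 / (1 + ε)) ≤ KT)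
    (lam : ℂ) (F G : ℝ → ℂ) (hF : BddBorelOn T F) (hG : BddBorelOn T G)
    (D β : ℝ) (hD : 0 ≤ D) (hβ : 0 ≤ β)
    (hbd : ∀ s ∈ Set.Icc (0:ℝ) T, ‖G s - F s‖ ≤ D * s ^ β) :
    ∀ t ∈ Set.Icc (0:ℝ) T, ‖Rop k lam G t - Rop k lam F t‖ ≤
      ‖lam‖ * KT * D * (β * (1 + 1/ε) + 1) ^ (-(ε/(1+ε))) * t ^ (1 - α + β) := by
  intro t ht
  by_cases ht0 : 0 < t
  · obtain ⟨MF, hMF⟩ := hF.2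
    obtain ⟨MG, hMG⟩ := hG.2
    have hFint := (auxA k hkm α ε hε T KT hK t ht0 ht.2 (max MF 0) 0
      (le_max_right MF 0) le_rfl F hF.1 (fun s hs => by
        rw [Real.rpow_zero, mul_one]
        exact (hMF s ⟨hs.1.le, hs.2.trans ht.2⟩).trans (le_max_left _ _))).1
    have hGint := (auxA k hkm α ε hε T KT hK t ht0 ht.2 (max MG 0) 0
      (le_max_right MG 0) le_rfl G hG.1 (fun s hs => by
        rw [Real.rpow_zero, mul_one]
        exact (hMG s ⟨hs.1.le, hs.2.trans ht.2⟩).trans (le_max_left _ _))).1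
    have hA := auxA k hkm α ε hε T KT hK t ht0 ht.2 D β hD hβ
      (fun s => G s - F s) (hG.1.sub hF.1)
      (fun s hs => hbd s ⟨hs.1.le, hs.2.trans ht.2⟩)
    have e1 : Rop k lam G t - Rop k lam F t =
        -(lam * ((∫ s in Set.Ioc (0:ℝ) t, (k t s : ℂ) * G s) -
          (∫ s in Set.Ioc (0:ℝ) t, (k t s : ℂ) * F s))) := by
      rw [Rop, Rop, if_pos ht0, if_pos ht0]; ring
    have e2 : (∫ s in Set.Ioc (0:ℝ) t, (k t s : ℂ) * G s) -
        (∫ s in Set.Ioc (0:ℝ) t, (k t s : ℂ) * F s) =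
        ∫ s in Set.Ioc (0:ℝ) t, (k t s : ℂ) * (G s - F s) := by
      rw [← integral_sub hGint hFint]
      congr 1
      funext s
      ring
    rw [e1, e2, norm_neg, norm_mul]
    have h1 : ‖∫ s in Set.Ioc (0:ℝ) t, (k t s : ℂ) * (G s - F s)‖ ≤
        ∫ s in Set.Ioc (0:ℝ) t, |k t s| * ‖G s - F s‖ := by
      have := norm_integral_le_integral_norm
        (μ := volume.restrict (Set.Ioc (0:ℝ) t)) (fun s => (k t s : ℂ) * (G s - F s))
      simpa only [norm_mul, Complex.norm_real, Real.norm_eq_abs] using this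
    calc ‖lam‖ * ‖∫ s in Set.Ioc (0:ℝ) t, (k t s : ℂ) * (G s - F s)‖
        ≤ ‖lam‖ * ∫ s in Set.Ioc (0:ℝ) t, |k t s| * ‖G s - F s‖ :=
          mul_le_mul_of_nonneg_left h1 (norm_nonneg _)
      _ ≤ ‖lam‖ * (KT * D * (β * (1 + 1/ε) + 1) ^ (-(ε/(1+ε))) * t ^ (1 - α + β)) :=
          mul_le_mul_of_nonneg_left hA.2 (norm_nonneg _)
      _ = ‖lam‖ * KT * D * (β * (1 + 1/ε) + 1) ^ (-(ε/(1+ε))) * t ^ (1 - α + β) := by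
          ring
  · have ht0' : t = 0 := le_antisymm (not_lt.mp ht0) ht.1
    have h1 : Rop k lam G t = 1 := by rw [Rop, if_neg ht0]
    have h2 : Rop k lam F t = 1 := by rw [Rop, if_neg ht0]
    rw [h1, h2, sub_self, norm_zero]
    have hb : (0:ℝ) ≤ (β * (1 + 1/ε) + 1) ^ (-(ε/(1+ε))) :=
      Real.rpow_nonneg (by positivity) _
    have hb2 : (0:ℝ) ≤ t ^ (1 - α + β) := by rw [ht0']; exact Real.rpow_nonneg le_rfl _
    positivity

theorem stmt3 (k : ℝ → ℝ → ℝ) (hkm : Measurable (Function.uncurry k))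
    (α ε : ℝ) (hα0 : 0 ≤ α) (hα1 : α < 1) (hε : 0 < ε)
    (T : ℝ) (hT : 0 < T) (KT : ℝ) (hKT0 : 0 ≤ KT)
    (hK : ∀ t : ℝ, 0 < t → t ≤ T →
      MeasureTheory.IntegrableOn (fun s => |k t s| ^ (1 + ε)) (Set.Ioc 0 t) ∧
      t ^ (α - 1 / (1 + ε)) *
        (∫ s in Set.Ioc (0:ℝ) t, |k t s| ^ (1 + ε)) ^ (1 / (1 + ε)) ≤ KT)
    (lam : ℂ) :
    (∀ n : ℕ, ∀ f g : ℝ → ℂ, BddBorelOn T f → BddBorelOn T g →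
      ∀ C : ℝ, 0 ≤ C → (∀ s ∈ Set.Icc (0:ℝ) T, ‖g s - f s‖ ≤ C) →
      ∀ t ∈ Set.Icc (0:ℝ) T,
        ‖(Rop k lam)^[n + 1] g t - (Rop k lam)^[n + 1] f t‖ ≤
          (‖lam‖ * KT * T ^ (1 - α)) ^ (n + 1) *
            (∏ l ∈ Finset.Icc 1 n,
              ((l : ℝ) * (1 - α) * (1 + 1 / ε) + 1) ^ (-(ε / (1 + ε)))) * C) ∧
    Filter.Tendsto
      (fun n : ℕ => (‖lam‖ * KT * T ^ (1 - α)) ^ (n + 1) *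
        ∏ l ∈ Finset.Icc 1 n,
          ((l : ℝ) * (1 - α) * (1 + 1 / ε) + 1) ^ (-(ε / (1 + ε))))
      Filter.atTop (nhds 0) := by
  have h1α : (0:ℝ) < 1 - α := by linarith
  have hprod : ∀ n : ℕ,
      (0:ℝ) ≤ ∏ l ∈ Finset.Icc (1:ℕ) n, ((l:ℝ)*(1-α)*(1+1/ε)+1) ^ (-(ε/(1+ε))) := by
    intro n
    refine Finset.prod_nonneg fun l _ => Real.rpow_nonneg ?_ _
    have hl : (0:ℝ) ≤ (l:ℝ) := Nat.cast_nonneg l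
    have : (0:ℝ) ≤ (l:ℝ)*(1-α)*(1+1/ε) :=
      mul_nonneg (mul_nonneg hl h1α.le) (by positivity)
    linarith
  have iterB : ∀ (n : ℕ) (g : ℝ → ℂ), BddBorelOn T g →
      BddBorelOn T ((Rop k lam)^[n] g) := by
    intro n
    induction n with
    | zero => intro g hg; simpa using hg
    | succ n ih =>
      intro g hg
      rw [Function.iterate_succ_apply']
      exact auxB k hkm α ε hα1 hε T hT KT hKT0 hK lam _ (ih g hg)
  have lemC : ∀ (f g : ℝ → ℂ), BddBorelOn T f → BddBorelOn T g → ∀ C : ℝ, 0 ≤ C →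
      (∀ s ∈ Set.Icc (0:ℝ) T, ‖g s - f s‖ ≤ C) → ∀ n : ℕ, ∀ t ∈ Set.Icc (0:ℝ) T,
      ‖(Rop k lam)^[n+1] g t - (Rop k lam)^[n+1] f t‖ ≤
        (‖lam‖ * KT)^(n+1) *
          (∏ l ∈ Finset.Icc (1:ℕ) n, ((l:ℝ)*(1-α)*(1+1/ε)+1) ^ (-(ε/(1+ε)))) *
          C * t ^ (((n:ℝ)+1) * (1-α)) := by
    intro f g hf hg C hC hgf n
    induction n with
    | zero =>
      intro t ht
      have hb : ∀ s ∈ Set.Icc (0:ℝ) T, ‖g s - f s‖ ≤ C * s ^ (0:ℝ) := fun s hs => by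
        rw [Real.rpow_zero, mul_one]; exact hgf s hs
      have hstep := auxStep k hkm α ε hα1 hε T hT KT hKT0 hK lam f g hf hg C 0
        hC le_rfl hb t ht
      calc ‖(Rop k lam)^[0+1] g t - (Rop k lam)^[0+1] f t‖
          = ‖Rop k lam g t - Rop k lam f t‖ := by
            rw [zero_add, Function.iterate_one]
        _ ≤ ‖lam‖ * KT * C * ((0:ℝ)*(1+1/ε)+1) ^ (-(ε/(1+ε))) * t ^ (1-α+0) := hstep
        _ = (‖lam‖ * KT)^(0+1) *
            (∏ l ∈ Finset.Icc (1:ℕ) 0, ((l:ℝ)*(1-α)*(1+1/ε)+1) ^ (-(ε/(1+ε)))) *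
            C * t ^ ((((0:ℕ):ℝ)+1) * (1-α)) := by
            rw [show (Finset.Icc 1 0 : Finset ℕ) = ∅ from Finset.Icc_eq_empty (by omega),
              Finset.prod_empty,
              show ((0:ℝ)*(1+1/ε)+1) = 1 by ring, Real.one_rpow,
              show (1:ℝ) - α + 0 = (((0:ℕ):ℝ)+1) * (1-α) by push_cast; ring]
            ring
    | succ n ih =>
      intro t ht
      by_cases ht0 : 0 < t
      · have hD : (0:ℝ) ≤ (‖lam‖ * KT)^(n+1) *
            (∏ l ∈ Finset.Icc (1:ℕ) n, ((l:ℝ)*(1-α)*(1+1/ε)+1) ^ (-(ε/(1+ε)))) * C :=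
          mul_nonneg (mul_nonneg (pow_nonneg (mul_nonneg (norm_nonneg lam) hKT0) _)
            (hprod n)) hC
        have hβ : (0:ℝ) ≤ ((n:ℝ)+1)*(1-α) := mul_nonneg (by positivity) h1α.le
        have hstep := auxStep k hkm α ε hα1 hε T hT KT hKT0 hK lam
          ((Rop k lam)^[n+1] f) ((Rop k lam)^[n+1] g)
          (iterB (n+1) f hf) (iterB (n+1) g hg)
          ((‖lam‖ * KT)^(n+1) *
            (∏ l ∈ Finset.Icc (1:ℕ) n, ((l:ℝ)*(1-α)*(1+1/ε)+1) ^ (-(ε/(1+ε)))) * C)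
          (((n:ℝ)+1)*(1-α)) hD hβ ih t ht
        rw [Function.iterate_succ_apply' (Rop k lam) (n+1) g,
          Function.iterate_succ_apply' (Rop k lam) (n+1) f]
        refine hstep.trans (le_of_eq ?_)
        rw [Finset.prod_Icc_succ_top (Nat.le_add_left 1 n),
          show (1:ℝ) - α + ((n:ℝ)+1)*(1-α) = (((n+1:ℕ):ℝ)+1)*(1-α) by push_cast; ring,
          show (((n:ℝ)+1)*(1-α))*(1+1/ε)+1 = ((n+1:ℕ):ℝ)*(1-α)*(1+1/ε)+1 by
            push_cast; ring]
        ring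
      · have ht0' : t = 0 := le_antisymm (not_lt.mp ht0) ht.1
        have hg0 : (Rop k lam)^[n+1+1] g t = 1 := by
          rw [ht0', Function.iterate_succ_apply']
          simp [Rop]
        have hf0 : (Rop k lam)^[n+1+1] f t = 1 := by
          rw [ht0', Function.iterate_succ_apply']
          simp [Rop]
        rw [hg0, hf0, sub_self, norm_zero]
        have h2 : (0:ℝ) ≤ t ^ ((((n+1:ℕ):ℝ)+1)*(1-α)) := by
          rw [ht0']; exact Real.rpow_nonneg le_rfl _
        exact mul_nonneg (mul_nonneg (mul_nonneg
          (pow_nonneg (mul_nonneg (norm_nonneg lam) hKT0) _) (hprod _)) hC) h2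
  constructor
  · intro n f g hf hg C hC hgf t ht
    have h := lemC f g hf hg C hC hgf n t ht
    have hcoef : (0:ℝ) ≤ (‖lam‖ * KT)^(n+1) *
        (∏ l ∈ Finset.Icc (1:ℕ) n, ((l:ℝ)*(1-α)*(1+1/ε)+1) ^ (-(ε/(1+ε)))) * C :=
      mul_nonneg (mul_nonneg (pow_nonneg (mul_nonneg (norm_nonneg lam) hKT0) _)
        (hprod n)) hC
    have h2 : t ^ (((n:ℝ)+1)*(1-α)) ≤ T ^ (((n:ℝ)+1)*(1-α)) :=
      Real.rpow_le_rpow ht.1 ht.2 (mul_nonneg (by positivity) h1α.le)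
    have h3 := h.trans (mul_le_mul_of_nonneg_left h2 hcoef)
    refine h3.trans (le_of_eq ?_)
    rw [show ((n:ℝ)+1)*(1-α) = (1-α)*((n+1:ℕ):ℝ) by push_cast; ring,
      Real.rpow_mul hT.le, Real.rpow_natCast, mul_pow, mul_pow]
    ring
  · have hA0 : (0:ℝ) ≤ ‖lam‖ * KT * T ^ (1 - α) :=
      mul_nonneg (mul_nonneg (norm_nonneg _) hKT0) (Real.rpow_nonneg hT.le _)
    have hu : ∀ n : ℕ, (0:ℝ) ≤ (‖lam‖ * KT * T ^ (1 - α)) ^ (n + 1) *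
        ∏ l ∈ Finset.Icc (1:ℕ) n, ((l : ℝ) * (1 - α) * (1 + 1 / ε) + 1) ^ (-(ε / (1 + ε))) :=
      fun n => mul_nonneg (pow_nonneg hA0 _) (hprod n)
    have hw : Tendsto (fun n : ℕ => (‖lam‖ * KT * T ^ (1-α)) *
        (((n+1:ℕ):ℝ)*(1-α)*(1+1/ε)+1) ^ (-(ε/(1+ε)))) atTop (nhds 0) := by
      have hbase : Tendsto (fun n : ℕ => ((n+1:ℕ):ℝ)*(1-α)*(1+1/ε)+1) atTop atTop := by
        apply tendsto_atTop_add_const_right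
        apply Tendsto.atTop_mul_const (by positivity : (0:ℝ) < 1+1/ε)
        apply Tendsto.atTop_mul_const h1α
        exact tendsto_natCast_atTop_atTop.comp (tendsto_add_atTop_nat 1)
      have h5 := (tendsto_rpow_neg_atTop (by positivity : (0:ℝ) < ε/(1+ε))).comp hbase
      have h6 := h5.const_mul (‖lam‖ * KT * T ^ (1-α))
      simpa [Function.comp] using h6
    obtain ⟨N, hN⟩ := eventually_atTop.mp
      (hw.eventually_le_const (by norm_num : (0:ℝ) < 1/2))
    refine aux_tendsto _ hu ⟨N, fun n hn => ?_⟩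
    have hrec : (‖lam‖ * KT * T ^ (1-α)) ^ (n+1+1) *
        (∏ l ∈ Finset.Icc (1:ℕ) (n+1), ((l:ℝ)*(1-α)*(1+1/ε)+1) ^ (-(ε/(1+ε)))) =
        ((‖lam‖ * KT * T ^ (1-α)) ^ (n+1) *
          ∏ l ∈ Finset.Icc (1:ℕ) n, ((l:ℝ)*(1-α)*(1+1/ε)+1) ^ (-(ε/(1+ε)))) *
        ((‖lam‖ * KT * T ^ (1-α)) *
          (((n+1:ℕ):ℝ)*(1-α)*(1+1/ε)+1) ^ (-(ε/(1+ε)))) := by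
      rw [Finset.prod_Icc_succ_top (Nat.le_add_left 1 n)]
      ring
    rw [hrec]
    calc ((‖lam‖ * KT * T ^ (1-α)) ^ (n+1) *
          ∏ l ∈ Finset.Icc (1:ℕ) n, ((l:ℝ)*(1-α)*(1+1/ε)+1) ^ (-(ε/(1+ε)))) *
        ((‖lam‖ * KT * T ^ (1-α)) *
          (((n+1:ℕ):ℝ)*(1-α)*(1+1/ε)+1) ^ (-(ε/(1+ε))))
        ≤ ((‖lam‖ * KT * T ^ (1-α)) ^ (n+1) *
          ∏ l ∈ Finset.Icc (1:ℕ) n, ((l:ℝ)*(1-α)*(1+1/ε)+1) ^ (-(ε/(1+ε)))) * (1/2) :=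
          mul_le_mul_of_nonneg_left (hN n hn) (hu n)
      _ = ((‖lam‖ * KT * T ^ (1-α)) ^ (n+1) *
          ∏ l ∈ Finset.Icc (1:ℕ) n, ((l:ℝ)*(1-α)*(1+1/ε)+1) ^ (-(ε/(1+ε)))) / 2 := by
          ring
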